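/- arXiv:1608.07778 — 4 statements merged into one kernel-verified Lean document; each statement's English description precedes it below -/
import Mathlib

section
/- Let G=(V,w,m) be a connected weighted graph with 𝔇 < ∞ satisfying the gradient estimate Γ(P_t f) ≤ e^{-2Kt} P_t(Γf) for all bounded f and t ≥ 0, where K > 0 and P_t is the heat semigroup. Then the resistance metric satisfies ρ(x₀,y₀) ≤ (√(2 Deg(x₀)) + √(2 Deg(y₀)))/K for all x₀, y₀ ∈ V. -/
open scoped ENNReal

structure WGraph (V : Type*) where
  w : V → V → ℝ
  m : V → ℝ
  symm : ∀ x y, w x y = w y x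
  nonneg : ∀ x y, 0 ≤ w x y
  loopless : ∀ x, w x x = 0
  mpos : ∀ x, 0 < m x
  locfin : ∀ x, {y | w x y ≠ 0}.Finite

variable {V : Type*}

noncomputable def WGraph.lap (G : WGraph V) (f : V → ℝ) (x : V) : ℝ :=
  (1 / G.m x) * ∑' y, G.w x y * (f y - f x)

noncomputable def WGraph.gamma (G : WGraph V) (f g : V → ℝ) (x : V) : ℝ :=
  (G.lap (f * g) x - f x * G.lap g x - g x * G.lap f x) / 2

noncomputable def WGraph.gamma2 (G : WGraph V) (f : V → ℝ) (x : V) : ℝ :=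
  (G.lap (G.gamma f f) x - 2 * G.gamma f (G.lap f) x) / 2

noncomputable def WGraph.deg (G : WGraph V) (x : V) : ℝ :=
  (∑' y, G.w x y) / G.m x

noncomputable def WGraph.cdist (G : WGraph V) (x y : V) : ℕ∞ :=
  ⨅ (n : ℕ) (_ : ∃ c : ℕ → V, c 0 = x ∧ c n = y ∧ ∀ i < n, 0 < G.w (c i) (c (i+1))), (n : ℕ∞)

noncomputable def WGraph.rho (G : WGraph V) (x y : V) : ℝ≥0∞ :=
  ⨆ (f : V → ℝ) (_ : ∀ z, G.gamma f f z ≤ 1), ENNReal.ofReal (f y - f x)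

noncomputable def WGraph.diamd (G : WGraph V) : ℝ≥0∞ := ⨆ x, ⨆ y, (G.cdist x y : ℝ≥0∞)

noncomputable def WGraph.diamrho (G : WGraph V) : ℝ≥0∞ := ⨆ x, ⨆ y, G.rho x y

def WGraph.Connected (G : WGraph V) : Prop :=
  ∀ x y, ∃ (n : ℕ) (c : ℕ → V), c 0 = x ∧ c n = y ∧ ∀ i < n, 0 < G.w (c i) (c (i+1))

/-- An abstract heat semigroup for the graph Laplacian: initial condition,
pointwise derivative given by the Laplacian (for bounded functions),
and the Markov properties (monotone bounds and positivity preservation). -/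
structure IsHeatSemigroup (G : WGraph V) (P : ℝ → (V → ℝ) → V → ℝ) : Prop where
  init : ∀ f, P 0 f = f
  deriv : ∀ (f : V → ℝ), (∃ C, ∀ x, |f x| ≤ C) →
    ∀ (t : ℝ) (x : V), HasDerivAt (fun s => P s f x) (G.lap (P t f) x) t
  mono : ∀ (g : V → ℝ) (c : ℝ), (∀ y, g y ≤ c) → ∀ t, 0 ≤ t → ∀ x, P t g x ≤ c
  pos : ∀ (g : V → ℝ), (∀ y, 0 ≤ g y) → ∀ t, 0 ≤ t → ∀ x, 0 ≤ P t g x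


namespace WGraph
variable (G : WGraph V)

noncomputable def nbr (x : V) : Finset V := (G.locfin x).toFinset

lemma mem_nbr {x y : V} : y ∈ G.nbr x ↔ G.w x y ≠ 0 := by simp [nbr]

lemma lap_eq_sum (f : V → ℝ) (x : V) :
    G.lap f x = (1 / G.m x) * ∑ y ∈ G.nbr x, G.w x y * (f y - f x) := by
  unfold lap
  congr 1
  refine tsum_eq_sum fun y hy => ?_
  rw [mem_nbr, not_not] at hy
  simp [hy]

lemma deg_eq_sum (x : V) :
    G.deg x = (∑ y ∈ G.nbr x, G.w x y) / G.m x := by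
  unfold deg
  congr 1
  refine tsum_eq_sum fun y hy => ?_
  rwa [mem_nbr, not_not] at hy

lemma deg_nonneg (x : V) : 0 ≤ G.deg x := by
  rw [deg_eq_sum]
  exact div_nonneg (Finset.sum_nonneg fun y _ => G.nonneg x y) (G.mpos x).le

lemma gamma_eq_sum (f : V → ℝ) (x : V) :
    G.gamma f f x = (1 / (2 * G.m x)) * ∑ y ∈ G.nbr x, G.w x y * (f y - f x) ^ 2 := by
  have key : ∑ y ∈ G.nbr x, G.w x y * ((f * f) y - (f * f) x)
      - f x * ∑ y ∈ G.nbr x, G.w x y * (f y - f x)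
      - f x * ∑ y ∈ G.nbr x, G.w x y * (f y - f x)
      = ∑ y ∈ G.nbr x, G.w x y * (f y - f x) ^ 2 := by
    rw [Finset.mul_sum, ← Finset.sum_sub_distrib, ← Finset.sum_sub_distrib]
    refine Finset.sum_congr rfl fun y _ => ?_
    simp only [Pi.mul_apply]
    ring
  have hm := (G.mpos x).ne'
  unfold gamma
  rw [G.lap_eq_sum (f * f), G.lap_eq_sum f, ← key]
  generalize (∑ y ∈ G.nbr x, G.w x y * ((f * f) y - (f * f) x)) = SA
  generalize (∑ y ∈ G.nbr x, G.w x y * (f y - f x)) = SB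
  rw [show (1:ℝ) / (2 * G.m x) = 1 / 2 * (1 / G.m x) from (one_div_mul_one_div 2 (G.m x)).symm]
  ring

lemma gamma_nonneg (f : V → ℝ) (x : V) : 0 ≤ G.gamma f f x := by
  rw [gamma_eq_sum]
  have hm := G.mpos x
  refine mul_nonneg (by positivity) (Finset.sum_nonneg fun y _ => ?_)
  exact mul_nonneg (G.nonneg x y) (sq_nonneg _)

lemma weight_mul_sq_le (f : V → ℝ) (x y : V) :
    G.w x y * (f y - f x) ^ 2 ≤ 2 * G.m x * G.gamma f f x := by
  have hm := G.mpos x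
  rw [gamma_eq_sum]
  have h2 : 2 * G.m x * (1 / (2 * G.m x) * ∑ z ∈ G.nbr x, G.w x z * (f z - f x) ^ 2)
      = ∑ z ∈ G.nbr x, G.w x z * (f z - f x) ^ 2 := by
    field_simp
  rw [h2]
  by_cases hw : G.w x y = 0
  · simp only [hw, zero_mul]
    exact Finset.sum_nonneg fun z _ => mul_nonneg (G.nonneg x z) (sq_nonneg _)
  · exact Finset.single_le_sum (f := fun z => G.w x z * (f z - f x) ^ 2)
      (fun z _ => mul_nonneg (G.nonneg x z) (sq_nonneg _)) (G.mem_nbr.2 hw)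

lemma lap_sq_le (f : V → ℝ) (x : V) :
    (G.lap f x) ^ 2 ≤ 2 * G.deg x * G.gamma f f x := by
  have hm := G.mpos x
  rw [lap_eq_sum, gamma_eq_sum, deg_eq_sum]
  have CS : (∑ y ∈ G.nbr x, G.w x y * (f y - f x)) ^ 2
      ≤ (∑ y ∈ G.nbr x, G.w x y) * ∑ y ∈ G.nbr x, G.w x y * (f y - f x) ^ 2 := by
    have h := Finset.sum_mul_sq_le_sq_mul_sq (G.nbr x) (fun y => Real.sqrt (G.w x y))
      (fun y => Real.sqrt (G.w x y) * (f y - f x))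
    have e1 : ∀ y ∈ G.nbr x, Real.sqrt (G.w x y) * (Real.sqrt (G.w x y) * (f y - f x))
        = G.w x y * (f y - f x) := fun y _ => by
      rw [← mul_assoc, Real.mul_self_sqrt (G.nonneg x y)]
    have e2 : ∀ y ∈ G.nbr x, (Real.sqrt (G.w x y)) ^ 2 = G.w x y := fun y _ =>
      Real.sq_sqrt (G.nonneg x y)
    have e3 : ∀ y ∈ G.nbr x, (Real.sqrt (G.w x y) * (f y - f x)) ^ 2
        = G.w x y * (f y - f x) ^ 2 := fun y _ => by
      rw [mul_pow, Real.sq_sqrt (G.nonneg x y)]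
    rwa [Finset.sum_congr rfl e1, Finset.sum_congr rfl e2, Finset.sum_congr rfl e3] at h
  calc (1 / G.m x * ∑ y ∈ G.nbr x, G.w x y * (f y - f x)) ^ 2
      = (∑ y ∈ G.nbr x, G.w x y * (f y - f x)) ^ 2 * (1 / G.m x ^ 2) := by ring
    _ ≤ ((∑ y ∈ G.nbr x, G.w x y) * ∑ y ∈ G.nbr x, G.w x y * (f y - f x) ^ 2)
        * (1 / G.m x ^ 2) := by
        exact mul_le_mul_of_nonneg_right CS (by positivity)
    _ = 2 * ((∑ y ∈ G.nbr x, G.w x y) / G.m x)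
        * (1 / (2 * G.m x) * ∑ y ∈ G.nbr x, G.w x y * (f y - f x) ^ 2) := by
        field_simp

lemma gamma_mono (f g : V → ℝ) (h : ∀ a b, |g a - g b| ≤ |f a - f b|) (x : V) :
    G.gamma g g x ≤ G.gamma f f x := by
  rw [gamma_eq_sum, gamma_eq_sum]
  have hm := G.mpos x
  refine mul_le_mul_of_nonneg_left (Finset.sum_le_sum fun y _ => ?_) (by positivity)
  refine mul_le_mul_of_nonneg_left ?_ (G.nonneg x y)
  rw [← sq_abs (g y - g x), ← sq_abs (f y - f x)]
  exact pow_le_pow_left₀ (abs_nonneg _) (h y x) 2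

end WGraph

lemma sqrt_mul_exp_neg_two (a b : ℝ) (ha : 0 ≤ a) :
    Real.sqrt (a * Real.exp (-(2 * b))) = Real.sqrt a * Real.exp (-b) := by
  rw [Real.sqrt_mul ha]
  congr 1
  rw [show -(2 * b) = -b + -b by ring, Real.exp_add, ← sq, Real.sqrt_sq (Real.exp_nonneg _)]

lemma abs_le_sqrt_exp {d a b : ℝ} (ha : 0 ≤ a) (h : d ^ 2 ≤ a * Real.exp (-(2 * b))) :
    |d| ≤ Real.sqrt a * Real.exp (-b) := by
  rw [← sqrt_mul_exp_neg_two a b ha, ← Real.sqrt_sq_eq_abs]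
  exact Real.sqrt_le_sqrt h


lemma dist_P_le (G : WGraph V) (K : ℝ) (hK : 0 < K) (P : ℝ → (V → ℝ) → V → ℝ)
    (hP : IsHeatSemigroup G P)
    (hgrad : ∀ (f : V → ℝ), (∃ C, ∀ x, |f x| ≤ C) → ∀ t, 0 ≤ t → ∀ x,
      G.gamma (P t f) (P t f) x ≤ Real.exp (-(2 * K * t)) * P t (G.gamma f f) x)
    (f : V → ℝ) (hb : ∃ C, ∀ x, |f x| ≤ C) (hg1 : ∀ z, G.gamma f f z ≤ 1)
    (x : V) (T : ℝ) (hT : 0 ≤ T) :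
    |P T f x - f x| ≤ Real.sqrt (2 * G.deg x) / K := by
  set s := Real.sqrt (2 * G.deg x) with hs
  have hs0 : 0 ≤ s := Real.sqrt_nonneg _
  have hdeg0 := G.deg_nonneg x
  have hlap : ∀ t, 0 ≤ t → |G.lap (P t f) x| ≤ s * Real.exp (-(K * t)) := by
    intro t ht
    have h1 := G.lap_sq_le (P t f) x
    have h2 := hgrad f hb t ht x
    have h3 := hP.mono (G.gamma f f) 1 hg1 t ht x
    have h4 : G.gamma (P t f) (P t f) x ≤ Real.exp (-(2 * (K * t))) := by
      rw [show -(2 * (K * t)) = -(2 * K * t) by ring]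
      calc G.gamma (P t f) (P t f) x
          ≤ Real.exp (-(2 * K * t)) * P t (G.gamma f f) x := h2
        _ ≤ Real.exp (-(2 * K * t)) * 1 :=
            mul_le_mul_of_nonneg_left h3 (Real.exp_nonneg _)
        _ = Real.exp (-(2 * K * t)) := mul_one _
    have h5 : (G.lap (P t f) x) ^ 2 ≤ 2 * G.deg x * Real.exp (-(2 * (K * t))) :=
      h1.trans (mul_le_mul_of_nonneg_left h4 (by linarith))
    exact abs_le_sqrt_exp (by linarith) h5
  have hexp : ∀ t : ℝ, HasDerivAt (fun u => Real.exp (-(K * u)))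
      (Real.exp (-(K * t)) * (-K)) t := by
    intro t
    have h : HasDerivAt (fun u : ℝ => -(K * u)) (-K) t := by
      have h' := ((hasDerivAt_id t).const_mul K).neg
      rw [mul_one] at h'
      exact h'
    exact h.exp
  have hderP := hP.deriv f hb
  have hup : P T f x - f x ≤ s / K * (1 - Real.exp (-(K * T))) := by
    set g := fun t => P t f x + s / K * Real.exp (-(K * t)) with hgdef
    have hder : ∀ t, HasDerivAt g
        (G.lap (P t f) x + s / K * (Real.exp (-(K * t)) * (-K))) t :=
      fun t => (hderP t x).add ((hexp t).const_mul (s / K))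
    have hanti : AntitoneOn g (Set.Ici (0 : ℝ)) := by
      refine antitoneOn_of_deriv_nonpos (convex_Ici 0)
        (fun t _ => (hder t).continuousAt.continuousWithinAt)
        (fun t _ => (hder t).differentiableAt.differentiableWithinAt) ?_
      intro t ht
      rw [interior_Ici] at ht
      rw [(hder t).deriv]
      have h6 := (abs_le.1 (hlap t ht.le)).2
      have h7 : s / K * (Real.exp (-(K * t)) * (-K)) = -(s * Real.exp (-(K * t))) := by
        field_simp
      rw [h7]
      linarith
    have h9 := hanti Set.self_mem_Ici (Set.mem_Ici.2 hT) hT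
    simp only [hgdef, hP.init, mul_zero, neg_zero, Real.exp_zero, mul_one] at h9
    linarith
  have hdn : P T f x - f x ≥ -(s / K * (1 - Real.exp (-(K * T)))) := by
    set g := fun t => P t f x - s / K * Real.exp (-(K * t)) with hgdef
    have hder : ∀ t, HasDerivAt g
        (G.lap (P t f) x - s / K * (Real.exp (-(K * t)) * (-K))) t :=
      fun t => (hderP t x).sub ((hexp t).const_mul (s / K))
    have hmono : MonotoneOn g (Set.Ici (0 : ℝ)) := by
      refine monotoneOn_of_deriv_nonneg (convex_Ici 0)
        (fun t _ => (hder t).continuousAt.continuousWithinAt)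
        (fun t _ => (hder t).differentiableAt.differentiableWithinAt) ?_
      intro t ht
      rw [interior_Ici] at ht
      rw [(hder t).deriv]
      have h6 := (abs_le.1 (hlap t ht.le)).1
      have h7 : s / K * (Real.exp (-(K * t)) * (-K)) = -(s * Real.exp (-(K * t))) := by
        field_simp
      rw [h7]
      linarith
    have h9 := hmono Set.self_mem_Ici (Set.mem_Ici.2 hT) hT
    simp only [hgdef, hP.init, mul_zero, neg_zero, Real.exp_zero, mul_one] at h9
    linarith
  have hfac : 0 ≤ s / K * Real.exp (-(K * T)) :=
    mul_nonneg (div_nonneg hs0 hK.le) (Real.exp_nonneg _)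
  have hsk : 0 ≤ s / K := div_nonneg hs0 hK.le
  rw [abs_le]
  constructor <;> nlinarith [Real.exp_nonneg (-(K * T))]


lemma key_bounded (G : WGraph V) (hconn : G.Connected)
    (K : ℝ) (hK : 0 < K) (P : ℝ → (V → ℝ) → V → ℝ) (hP : IsHeatSemigroup G P)
    (hgrad : ∀ (f : V → ℝ), (∃ C, ∀ x, |f x| ≤ C) → ∀ t, 0 ≤ t → ∀ x,
      G.gamma (P t f) (P t f) x ≤ Real.exp (-(2 * K * t)) * P t (G.gamma f f) x)
    (f : V → ℝ) (hb : ∃ C, ∀ x, |f x| ≤ C) (hg1 : ∀ z, G.gamma f f z ≤ 1)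
    (x₀ y₀ : V) :
    f y₀ - f x₀ ≤ (Real.sqrt (2 * G.deg x₀) + Real.sqrt (2 * G.deg y₀)) / K := by
  obtain ⟨n, c, hc0, hcn, hcw⟩ := hconn x₀ y₀
  set Cp := ∑ i ∈ Finset.range n, Real.sqrt (2 * G.m (c i) / G.w (c i) (c (i + 1))) with hCp
  have hCp0 : 0 ≤ Cp := Finset.sum_nonneg fun i _ => Real.sqrt_nonneg _
  set B := (Real.sqrt (2 * G.deg x₀) + Real.sqrt (2 * G.deg y₀)) / K with hB
  have hmain : ∀ T, 0 ≤ T → f y₀ - f x₀ ≤ B + Cp * Real.exp (-(K * T)) := by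
    intro T hT
    have hax := dist_P_le G K hK P hP hgrad f hb hg1 x₀ T hT
    have hay := dist_P_le G K hK P hP hgrad f hb hg1 y₀ T hT
    have hgammaT : ∀ z, G.gamma (P T f) (P T f) z ≤ Real.exp (-(2 * (K * T))) := by
      intro z
      rw [show -(2 * (K * T)) = -(2 * K * T) by ring]
      calc G.gamma (P T f) (P T f) z
          ≤ Real.exp (-(2 * K * T)) * P T (G.gamma f f) z := hgrad f hb T hT z
        _ ≤ Real.exp (-(2 * K * T)) * 1 :=
            mul_le_mul_of_nonneg_left (hP.mono (G.gamma f f) 1 hg1 T hT z) (Real.exp_nonneg _)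
        _ = Real.exp (-(2 * K * T)) := mul_one _
    have hedge : ∀ i < n, |P T f (c (i + 1)) - P T f (c i)|
        ≤ Real.sqrt (2 * G.m (c i) / G.w (c i) (c (i + 1))) * Real.exp (-(K * T)) := by
      intro i hi
      have hw := hcw i hi
      have h1 := G.weight_mul_sq_le (P T f) (c i) (c (i + 1))
      have hm := G.mpos (c i)
      have h2 : (P T f (c (i + 1)) - P T f (c i)) ^ 2
          ≤ 2 * G.m (c i) / G.w (c i) (c (i + 1)) * Real.exp (-(2 * (K * T))) := by
        rw [div_mul_eq_mul_div, le_div_iff₀ hw]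
        calc (P T f (c (i + 1)) - P T f (c i)) ^ 2 * G.w (c i) (c (i + 1))
            = G.w (c i) (c (i + 1)) * (P T f (c (i + 1)) - P T f (c i)) ^ 2 := by ring
          _ ≤ 2 * G.m (c i) * G.gamma (P T f) (P T f) (c i) := h1
          _ ≤ 2 * G.m (c i) * Real.exp (-(2 * (K * T))) :=
              mul_le_mul_of_nonneg_left (hgammaT (c i)) (by linarith)
      exact abs_le_sqrt_exp (by positivity) h2
    have htele : |P T f y₀ - P T f x₀| ≤ Cp * Real.exp (-(K * T)) := by
      have e1 : P T f y₀ - P T f x₀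
          = ∑ i ∈ Finset.range n, (P T f (c (i + 1)) - P T f (c i)) := by
        rw [Finset.sum_range_sub (fun i => P T f (c i)) n, hc0, hcn]
      rw [e1, hCp, Finset.sum_mul]
      calc |∑ i ∈ Finset.range n, (P T f (c (i + 1)) - P T f (c i))|
          ≤ ∑ i ∈ Finset.range n, |P T f (c (i + 1)) - P T f (c i)| :=
            Finset.abs_sum_le_sum_abs _ _
        _ ≤ ∑ i ∈ Finset.range n,
            Real.sqrt (2 * G.m (c i) / G.w (c i) (c (i + 1))) * Real.exp (-(K * T)) :=
            Finset.sum_le_sum fun i hi => hedge i (Finset.mem_range.1 hi)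
    have hx1 := (abs_le.1 hax).2
    have hy1 := (abs_le.1 hay).2
    have ht1 := (abs_le.1 htele).2
    have hBsplit : B = Real.sqrt (2 * G.deg x₀) / K + Real.sqrt (2 * G.deg y₀) / K := by
      rw [hB, add_div]
    have : f y₀ - f x₀ = -(P T f y₀ - f y₀) + (P T f y₀ - P T f x₀) + (P T f x₀ - f x₀) := by
      ring
    rw [this, hBsplit]
    have hy1' : -(P T f y₀ - f y₀) ≤ Real.sqrt (2 * G.deg y₀) / K := by
      have := (abs_le.1 hay).1
      linarith
    linarith
  have htend : Filter.Tendsto (fun T : ℝ => B + Cp * Real.exp (-(K * T)))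
      Filter.atTop (nhds (B + Cp * 0)) := by
    refine Filter.Tendsto.const_add _ (Filter.Tendsto.const_mul _ ?_)
    refine Real.tendsto_exp_atBot.comp ?_
    have h1 : Filter.Tendsto (fun T : ℝ => K * T) Filter.atTop Filter.atTop :=
      Filter.Tendsto.const_mul_atTop hK Filter.tendsto_id
    simpa [Function.comp_def] using Filter.tendsto_neg_atTop_atBot.comp h1
  rw [mul_zero, add_zero] at htend
  refine ge_of_tendsto htend ?_
  filter_upwards [Filter.eventually_ge_atTop (0 : ℝ)] with T hT
  exact hmain T hT


/-- gradient estimate Γ(P_t f) ≤ e^{-2Kt}P_t(Γf) for bounded f, K>0,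
connected, 𝔇 < ∞ ⟹ ρ(x₀,y₀) ≤ (√(2 Deg x₀) + √(2 Deg y₀))/K. -/
theorem rho_le_of_gradient_estimate (G : WGraph V) (hconn : G.Connected)
    (hDfin : BddAbove (Set.range G.deg))
    (K : ℝ) (hK : 0 < K) (P : ℝ → (V → ℝ) → V → ℝ) (hP : IsHeatSemigroup G P)
    (hgrad : ∀ (f : V → ℝ), (∃ C, ∀ x, |f x| ≤ C) → ∀ t, 0 ≤ t → ∀ x,
      G.gamma (P t f) (P t f) x ≤ Real.exp (-(2 * K * t)) * P t (G.gamma f f) x)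
    (x₀ y₀ : V) :
    G.rho x₀ y₀ ≤
      ENNReal.ofReal ((Real.sqrt (2 * G.deg x₀) + Real.sqrt (2 * G.deg y₀)) / K) := by
  refine iSup₂_le fun f hf => ?_
  refine ENNReal.ofReal_le_ofReal ?_
  set M := |f x₀| ⊔ |f y₀| with hM
  have hM0 : 0 ≤ M := le_trans (abs_nonneg _) le_sup_left
  have hfx : |f x₀| ≤ M := le_sup_left
  have hfy : |f y₀| ≤ M := le_sup_right
  set g := fun v => max (-M) (min (f v) M) with hg
  have hgb : ∀ v, |g v| ≤ M := by
    intro v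
    rw [abs_le]
    refine ⟨le_max_left _ _, max_le (by linarith) (min_le_right _ _)⟩
  have hlip : ∀ a b, |g a - g b| ≤ |f a - f b| := by
    intro a b
    have h1 : |g a - g b| ≤ |min (f a) M - min (f b) M| := by
      rw [hg]
      simp only
      rw [max_comm (-M) (min (f a) M), max_comm (-M) (min (f b) M)]
      exact abs_max_sub_max_le_abs _ _ _
    have h2 : |min (f a) M - min (f b) M| ≤ |f a - f b| := by
      have h3 := abs_min_sub_min_le_max (f a) M (f b) M
      simpa using h3
    exact h1.trans h2
  have hg1 : ∀ z, G.gamma g g z ≤ 1 := fun z =>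
    le_trans (G.gamma_mono f g hlip z) (hf z)
  have hgx : g x₀ = f x₀ := by
    rw [hg]
    simp only
    rw [min_eq_left (le_trans (le_abs_self _) hfx),
      max_eq_right (by
        have := neg_abs_le (f x₀)
        linarith)]
  have hgy : g y₀ = f y₀ := by
    rw [hg]
    simp only
    rw [min_eq_left (le_trans (le_abs_self _) hfy),
      max_eq_right (by
        have := neg_abs_le (f y₀)
        linarith)]
  have hkey := key_bounded G hconn K hK P hP hgrad g ⟨M, hgb⟩ hg1 x₀ y₀
  rw [hgx, hgy] at hkey
  exact hkey
end

section
/- The n-dimensional hypercube graph Q_n (vertex set {0,1}ⁿ, unit edge weights between vertices differing in exactly one coordinate, vertex measure m ≡ 1) satisfies the Bakry-Émery curvature dimension condition CD(2,∞), i.e., Γ₂(f) ≥ 2Γ(f) for all f: {0,1}ⁿ → ℝ. -/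
open scoped ENNReal

variable {V : Type*}

/-- The n-dimensional hypercube: vertices {0,1}ⁿ, unit weights between vertices
differing in exactly one coordinate, vertex measure ≡ 1. -/
noncomputable def cube (n : ℕ) : WGraph (Fin n → Bool) where
  w x y := if (Finset.univ.filter fun i => x i ≠ y i).card = 1 then 1 else 0
  m _ := 1
  symm x y := by
    have h : (Finset.univ.filter fun i => x i ≠ y i)
        = (Finset.univ.filter fun i => y i ≠ x i) := by
      apply Finset.filter_congr
      intro i _
      simp [ne_comm]
    simp [h]
  nonneg x y := by (try dsimp only); split <;> norm_num
  loopless x := by simp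
  mpos _ := one_pos
  locfin x := Set.toFinite _

namespace CubeCD

variable {n : ℕ}

/-- Flip coordinate `i`. -/
def upd (x : Fin n → Bool) (i : Fin n) : Fin n → Bool := Function.update x i (!(x i))

lemma upd_self (x : Fin n → Bool) (i : Fin n) : upd x i i = !(x i) :=
  Function.update_self _ _ _

lemma upd_ne (x : Fin n → Bool) {i j : Fin n} (h : j ≠ i) : upd x i j = x j :=
  Function.update_of_ne h _ _

lemma upd_upd (x : Fin n → Bool) (i : Fin n) : upd (upd x i) i = x := by
  funext j
  by_cases h : j = i
  · subst h; simp [upd]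
  · rw [upd_ne _ h, upd_ne _ h]

lemma upd_comm (x : Fin n → Bool) (i j : Fin n) :
    upd (upd x i) j = upd (upd x j) i := by
  by_cases h : i = j
  · subst h; rfl
  · unfold upd
    rw [Function.update_of_ne (Ne.symm h), Function.update_of_ne h,
      Function.update_comm (Ne.symm h)]

lemma upd_injective (x : Fin n → Bool) : Function.Injective (upd x) := by
  intro i j hij
  by_contra h
  have h1 : upd x i i = !(x i) := upd_self x i
  have h2 : upd x j i = x i := upd_ne x (fun hh => h hh)
  rw [hij, h2] at h1
  exact (Bool.not_ne_self (x i)).symm h1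

lemma filter_eq_image (x : Fin n → Bool) :
    (Finset.univ.filter fun y => (Finset.univ.filter fun i => x i ≠ y i).card = 1)
      = Finset.image (upd x) Finset.univ := by
  ext y
  simp only [Finset.mem_filter, Finset.mem_univ, true_and, Finset.mem_image]
  constructor
  · intro h
    obtain ⟨i, hi⟩ := Finset.card_eq_one.mp h
    refine ⟨i, ?_⟩
    funext j
    by_cases hji : j = i
    · subst hji
      have : x j ≠ y j := by
        have : j ∈ Finset.univ.filter fun i => x i ≠ y i := by rw [hi]; exact Finset.mem_singleton_self j
        simpa using this
      rw [upd_self]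
      cases hx : x j <;> cases hy : y j <;> simp_all
    · have : x j = y j := by
        by_contra hne
        have : j ∈ Finset.univ.filter fun i => x i ≠ y i := by simpa using hne
        rw [hi] at this
        exact hji (Finset.mem_singleton.mp this)
      rw [upd_ne _ hji]
      exact this
  · rintro ⟨i, rfl⟩
    have : (Finset.univ.filter fun j => x j ≠ upd x i j) = {i} := by
      ext j
      simp only [Finset.mem_filter, Finset.mem_univ, true_and, Finset.mem_singleton]
      constructor
      · intro hj
        by_contra hji
        exact hj (upd_ne x hji).symm
      · rintro rfl
        rw [upd_self]
        intro h
        exact (Bool.not_ne_self (x j)) h.symm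
    rw [this, Finset.card_singleton]

lemma nbr_sum (x : Fin n → Bool) (g : (Fin n → Bool) → ℝ) :
    ∑' y, (cube n).w x y * g y = ∑ i, g (upd x i) := by
  rw [tsum_fintype]
  have h1 : ∀ y, (cube n).w x y * g y
      = if (Finset.univ.filter fun i => x i ≠ y i).card = 1 then g y else 0 := by
    intro y
    simp only [cube]
    split <;> simp
  calc ∑ y, (cube n).w x y * g y
      = ∑ y, if (Finset.univ.filter fun i => x i ≠ y i).card = 1 then g y else 0 :=
        Finset.sum_congr rfl fun y _ => h1 y
    _ = ∑ y ∈ (Finset.univ.filter fun y => (Finset.univ.filter fun i => x i ≠ y i).card = 1), g y :=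
        (Finset.sum_filter _ _).symm
    _ = ∑ y ∈ Finset.image (upd x) Finset.univ, g y := by rw [filter_eq_image]
    _ = ∑ i, g (upd x i) := Finset.sum_image fun i _ j _ h => upd_injective x h

lemma lap_eq (f : (Fin n → Bool) → ℝ) (x : Fin n → Bool) :
    (cube n).lap f x = ∑ i, (f (upd x i) - f x) := by
  unfold WGraph.lap
  rw [nbr_sum x (fun y => f y - f x)]
  simp [cube]

lemma gamma_eq (f g : (Fin n → Bool) → ℝ) (x : Fin n → Bool) :
    (cube n).gamma f g x = (∑ i, (f (upd x i) - f x) * (g (upd x i) - g x)) / 2 := by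
  unfold WGraph.gamma
  rw [lap_eq, lap_eq, lap_eq, Finset.mul_sum, Finset.mul_sum,
    ← Finset.sum_sub_distrib, ← Finset.sum_sub_distrib]
  congr 1
  apply Finset.sum_congr rfl
  intro i _
  simp only [Pi.mul_apply]
  ring

end CubeCD

/-- the hypercube Q_n satisfies CD(2,∞): Γ₂(f) ≥ 2Γ(f). -/
theorem cube_CD_two (n : ℕ) (f : (Fin n → Bool) → ℝ) (x : Fin n → Bool) :
    2 * (cube n).gamma f f x ≤ (cube n).gamma2 f x := by
  classical
  open CubeCD in
  set a : Fin n → ℝ := fun i => f (upd x i) - f x with ha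
  set b : Fin n → Fin n → ℝ := fun i j => f (upd (upd x i) j) - f x with hb
  set c : Fin n → Fin n → ℝ := fun i j => b i j - a i - a j with hc
  have hbsymm : ∀ i j, b i j = b j i := by
    intro i j; simp only [hb]; rw [upd_comm]
  have hbdiag : ∀ i, b i i = 0 := by
    intro i; simp only [hb]; rw [upd_upd]; ring
  have hcsymm : ∀ i j, c i j = c j i := by
    intro i j; simp only [hc]; rw [hbsymm]; ring
  -- basic computations
  have hgam : (cube n).gamma f f x = (∑ i, (a i) ^ 2) / 2 := by
    rw [gamma_eq]
    congr 1
    exact Finset.sum_congr rfl fun i _ => by simp only [ha]; ring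
  have hgam_nbr : ∀ i, (cube n).gamma f f (upd x i) = (∑ j, (b i j - a i) ^ 2) / 2 := by
    intro i
    rw [gamma_eq]
    congr 1
    exact Finset.sum_congr rfl fun j _ => by simp only [ha, hb]; ring
  have hlap : (cube n).lap f x = ∑ i, a i := lap_eq f x
  have hlap_nbr : ∀ i, (cube n).lap f (upd x i) = ∑ j, (b i j - a i) := by
    intro i
    rw [lap_eq]
    exact Finset.sum_congr rfl fun j _ => by simp only [ha, hb]; ring
  -- Γ₂ as a double sum
  have hG2 : (cube n).gamma2 f x = (∑ i, ∑ j,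
      ((b i j - a i) ^ 2 - (a j) ^ 2 - 2 * a i * c i j)) / 4 := by
    unfold WGraph.gamma2
    rw [gamma_eq f ((cube n).lap f) x, lap_eq ((cube n).gamma f f) x]
    have h1 : ∑ i, ((cube n).gamma f f (upd x i) - (cube n).gamma f f x)
        = ∑ i, ((∑ j, (b i j - a i) ^ 2) / 2 - (∑ j, (a j) ^ 2) / 2) :=
      Finset.sum_congr rfl fun i _ => by rw [hgam_nbr, hgam]
    have h2 : ∑ i, (f (upd x i) - f x) * ((cube n).lap f (upd x i) - (cube n).lap f x)
        = ∑ i, a i * ((∑ j, (b i j - a i)) - ∑ j, a j) :=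
      Finset.sum_congr rfl fun i _ => by rw [hlap_nbr, hlap]
    rw [h1, h2]
    have e1 : ∑ i, ((∑ j, (b i j - a i) ^ 2) / 2 - (∑ j, (a j) ^ 2) / 2)
        = (∑ i, ((∑ j, (b i j - a i) ^ 2) - (∑ j, (a j) ^ 2))) / 2 :=
      calc ∑ i, ((∑ j, (b i j - a i) ^ 2) / 2 - (∑ j, (a j) ^ 2) / 2)
          = ∑ i, (((∑ j, (b i j - a i) ^ 2) - (∑ j, (a j) ^ 2)) / 2) :=
            Finset.sum_congr rfl fun i _ => by ring
        _ = _ := (Finset.sum_div _ _ _).symm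
    have e2 : ∑ i, ∑ j, ((b i j - a i) ^ 2 - (a j) ^ 2 - 2 * a i * c i j)
        = (∑ i, ((∑ j, (b i j - a i) ^ 2) - (∑ j, (a j) ^ 2)))
          - 2 * (∑ i, a i * ((∑ j, (b i j - a i)) - ∑ j, a j)) := by
      rw [Finset.mul_sum, ← Finset.sum_sub_distrib]
      apply Finset.sum_congr rfl
      intro i _
      rw [Finset.sum_sub_distrib, Finset.sum_sub_distrib]
      congr 1
      have hpt : ∀ j : Fin n, 2 * a i * c i j = 2 * a i * ((b i j - a i) - a j) :=
        fun j => by simp only [hc]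
      rw [Finset.sum_congr rfl fun j _ => hpt j, ← Finset.mul_sum,
        Finset.sum_sub_distrib]
      ring
    rw [e1, e2]
    ring
  -- the double sum equals ∑∑ c²
  have hswap : ∑ i, ∑ j, a j * c i j = ∑ i, ∑ j, a i * c i j := by
    rw [Finset.sum_comm]
    exact Finset.sum_congr rfl fun i _ => Finset.sum_congr rfl fun j _ => by rw [hcsymm]
  have hsq : ∑ i, ∑ j, ((b i j - a i) ^ 2 - (a j) ^ 2 - 2 * a i * c i j)
      = ∑ i, ∑ j, (c i j) ^ 2 := by
    have hpt : ∀ i j : Fin n, (b i j - a i) ^ 2 - (a j) ^ 2 - 2 * a i * c i j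
        = (c i j) ^ 2 + 2 * (a j * c i j) - 2 * (a i * c i j) := by
      intro i j
      have : b i j - a i = c i j + a j := by simp only [hc]; ring
      rw [this]; ring
    calc ∑ i, ∑ j, ((b i j - a i) ^ 2 - (a j) ^ 2 - 2 * a i * c i j)
        = ∑ i, ∑ j, ((c i j) ^ 2 + 2 * (a j * c i j) - 2 * (a i * c i j)) :=
          Finset.sum_congr rfl fun i _ => Finset.sum_congr rfl fun j _ => hpt i j
      _ = (∑ i, ∑ j, (c i j) ^ 2) + 2 * (∑ i, ∑ j, a j * c i j)
            - 2 * (∑ i, ∑ j, a i * c i j) := by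
          simp only [Finset.sum_add_distrib, Finset.sum_sub_distrib, Finset.mul_sum]
      _ = ∑ i, ∑ j, (c i j) ^ 2 := by rw [hswap]; ring
  -- the diagonal gives 2Γ
  have hdiag : ∀ i : Fin n, (c i i) ^ 2 = 4 * (a i) ^ 2 := by
    intro i
    simp only [hc]
    rw [hbdiag]
    ring
  have hle : ∑ i, 4 * (a i) ^ 2 ≤ ∑ i, ∑ j, (c i j) ^ 2 := by
    apply Finset.sum_le_sum
    intro i _
    rw [← hdiag i]
    exact Finset.single_le_sum (fun j _ => sq_nonneg (c i j)) (Finset.mem_univ i)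
  rw [hG2, hsq, hgam]
  have h4 : ∑ i, 4 * (a i) ^ 2 = 4 * ∑ i, (a i) ^ 2 := by rw [Finset.mul_sum]
  linarith [hle, h4 ▸ hle]
end

section
/- Suppose for a connected weighted graph G=(V,w,m) with heat semigroup P_t and K > 0, n ∈ (0,∞), the inequality Γ(P_t f) ≤ e^{-2Kt} P_t(Γf) − ((1−e^{-2Kt})/(Kn))·(Δ P_t f)² holds pointwise for all bounded f with bounded Γf and all t > 0. Then the resistance diameter satisfies diam_ρ(G) ≤ π√(n/K). -/
open scoped ENNReal

variable {V : Type*}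

lemma WGraph.summable_aux (G : WGraph V) (x : V) (F : V → ℝ) :
    Summable (fun y => G.w x y * F y) := by
  apply summable_of_ne_finset_zero (s := (G.locfin x).toFinset)
  intro y hy
  have : G.w x y = 0 := by
    by_contra h
    exact hy ((G.locfin x).mem_toFinset.2 h)
  simp [this]

lemma WGraph.gamma_eq (G : WGraph V) (f : V → ℝ) (x : V) :
    G.gamma f f x = (1 / (2 * G.m x)) * ∑' y, G.w x y * (f y - f x) ^ 2 := by
  have hm := G.mpos x
  have h1 : ∑' y, G.w x y * (f y - f x) ^ 2
      = (∑' y, G.w x y * (f y * f y - f x * f x))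
        - (2 * f x) * ∑' y, G.w x y * (f y - f x) := by
    rw [← tsum_mul_left, ← Summable.tsum_sub (G.summable_aux x _) ((G.summable_aux x _).mul_left _)]
    congr 1; funext y; ring
  unfold WGraph.gamma WGraph.lap
  simp only [Pi.mul_apply]
  rw [h1]
  field_simp
  ring

lemma WGraph.gamma_self_nonneg (G : WGraph V) (f : V → ℝ) (x : V) :
    0 ≤ G.gamma f f x := by
  rw [G.gamma_eq]
  have hm := G.mpos x
  apply mul_nonneg (by positivity)
  exact tsum_nonneg fun y => mul_nonneg (G.nonneg x y) (sq_nonneg _)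

lemma WGraph.term_le_gamma (G : WGraph V) (f : V → ℝ) (x y : V) :
    G.w x y * (f y - f x) ^ 2 ≤ 2 * G.m x * G.gamma f f x := by
  rw [G.gamma_eq]
  have hm := G.mpos x
  have h : G.w x y * (f y - f x) ^ 2 ≤ ∑' z, G.w x z * (f z - f x) ^ 2 :=
    Summable.le_tsum (f := fun z => G.w x z * (f z - f x) ^ 2) (G.summable_aux x _) y
      fun z _ => mul_nonneg (G.nonneg x z) (sq_nonneg _)
  calc G.w x y * (f y - f x) ^ 2 ≤ ∑' z, G.w x z * (f z - f x) ^ 2 := h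
    _ = 2 * G.m x * ((1 / (2 * G.m x)) * ∑' z, G.w x z * (f z - f x) ^ 2) := by
        field_simp
  
lemma WGraph.gamma_le_gamma (G : WGraph V) (f g : V → ℝ)
    (h : ∀ u v : V, (g u - g v) ^ 2 ≤ (f u - f v) ^ 2) (x : V) :
    G.gamma g g x ≤ G.gamma f f x := by
  rw [G.gamma_eq, G.gamma_eq]
  have hm := G.mpos x
  apply mul_le_mul_of_nonneg_left _ (by positivity)
  exact Summable.tsum_le_tsum (fun y => mul_le_mul_of_nonneg_left (h y x) (G.nonneg x y))
    (G.summable_aux x _) (G.summable_aux x _)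

lemma psi_hasDeriv (K n t : ℝ) (hK : 0 < K) (hn : 0 < n) (ht : 0 < t) :
    HasDerivAt (fun s => -(Real.sqrt (n / K) * Real.arcsin (Real.exp (-(K * s)))))
      (Real.sqrt (n / K) *
        (K * Real.exp (-(K * t)) / Real.sqrt (1 - Real.exp (-(K * t)) ^ 2))) t := by
  set x := Real.exp (-(K * t)) with hxdef
  have hx0 : 0 < x := Real.exp_pos _
  have hx1 : x < 1 := Real.exp_lt_one_iff.2 (by nlinarith)
  have h1 : HasDerivAt (fun s : ℝ => -(K * s)) (-K) t := by
    have := ((hasDerivAt_id t).const_mul K).neg; rw [mul_one] at this; exact this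
  have h2 : HasDerivAt (fun s : ℝ => Real.exp (-(K * s))) (x * -K) t := h1.exp
  have h3 : HasDerivAt (fun s : ℝ => Real.arcsin (Real.exp (-(K * s))))
      ((1 / Real.sqrt (1 - x ^ 2)) * (x * -K)) t :=
    by have := (Real.hasDerivAt_arcsin (ne_of_gt (by linarith)) (ne_of_lt hx1)).comp t h2; exact this
  have h4 : HasDerivAt (fun s : ℝ => -(Real.sqrt (n / K) * Real.arcsin (Real.exp (-(K * s)))))
      (-(Real.sqrt (n / K) * ((1 / Real.sqrt (1 - x ^ 2)) * (x * -K)))) t :=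
    (h3.const_mul (Real.sqrt (n / K))).neg
  convert h4 using 1
  ring

lemma psi_cont (K n : ℝ) :
    Continuous (fun s => -(Real.sqrt (n / K) * Real.arcsin (Real.exp (-(K * s))))) := by
  exact ((Real.continuous_arcsin.comp (Real.continuous_exp.comp
    ((continuous_const.mul continuous_id).neg))).const_smul (Real.sqrt (n / K))).neg

lemma mono_help (K n : ℝ) (hK : 0 < K) (hn : 0 < n) (g d : ℝ → ℝ)
    (hg : ∀ t, HasDerivAt g (d t) t)
    (hd : ∀ t, 0 < t → |d t| ≤ Real.sqrt (n / K) *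
      (K * Real.exp (-(K * t)) / Real.sqrt (1 - Real.exp (-(K * t)) ^ 2)))
    (T : ℝ) (hT : 0 ≤ T) : |g T - g 0| ≤ Real.sqrt (n / K) * (Real.pi / 2) := by
  set ψ : ℝ → ℝ := fun s => -(Real.sqrt (n / K) * Real.arcsin (Real.exp (-(K * s)))) with hψ
  have hψ0 : ψ 0 = -(Real.sqrt (n / K) * (Real.pi / 2)) := by
    simp [hψ, Real.arcsin_one]
  have hψT : ψ T ≤ 0 := by
    simp only [hψ, neg_nonpos]
    exact mul_nonneg (Real.sqrt_nonneg _) (Real.arcsin_nonneg.2 (Real.exp_nonneg _))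
  have hgc : Continuous g := by
    rw [continuous_iff_continuousAt]; exact fun t => (hg t).continuousAt
  have key : ∀ s : ℝ, s = 1 ∨ s = -1 →
      MonotoneOn (fun t => ψ t + s * g t) (Set.Icc 0 T) := by
    intro s hs
    apply monotoneOn_of_deriv_nonneg (convex_Icc 0 T)
    · exact ((psi_cont K n).add (continuous_const.mul hgc)).continuousOn
    · intro t ht
      rw [interior_Icc] at ht
      exact ((psi_hasDeriv K n t hK hn ht.1).add
        ((hg t).const_mul s)).differentiableAt.differentiableWithinAt
    · intro t ht
      rw [interior_Icc] at ht
      have hD := (psi_hasDeriv K n t hK hn ht.1).add ((hg t).const_mul s)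
      rw [show deriv (fun t => ψ t + s * g t) t = _ from hD.deriv]
      have habs := hd t ht.1
      have h1 : |s * d t| = |d t| := by rcases hs with h | h <;> simp [h]
      have := abs_le.1 (h1 ▸ habs)
      linarith [this.1, this.2]
  have h1 := key 1 (Or.inl rfl) (Set.left_mem_Icc.2 hT) (Set.right_mem_Icc.2 hT) hT
  have h2 := key (-1) (Or.inr rfl) (Set.left_mem_Icc.2 hT) (Set.right_mem_Icc.2 hT) hT
  simp only [one_mul, neg_one_mul] at h1 h2
  rw [hψ0] at h1 h2
  clear_value ψ
  rw [abs_le]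
  constructor <;> linarith

lemma key_bound (G : WGraph V) (hconn : G.Connected)
    (K n : ℝ) (hK : 0 < K) (hn : 0 < n)
    (P : ℝ → (V → ℝ) → V → ℝ) (hP : IsHeatSemigroup G P)
    (hCDn : ∀ (f : V → ℝ), (∃ C, ∀ x, |f x| ≤ C) → (∃ C, ∀ x, |G.gamma f f x| ≤ C) →
      ∀ t, 0 < t → ∀ x,
        G.gamma (P t f) (P t f) x ≤ Real.exp (-(2 * K * t)) * P t (G.gamma f f) x
          - ((1 - Real.exp (-(2 * K * t))) / (K * n)) * (G.lap (P t f) x) ^ 2)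
    (f : V → ℝ) (hb : ∃ C, ∀ x, |f x| ≤ C) (hg1 : ∀ z, G.gamma f f z ≤ 1)
    (x y : V) : f y - f x ≤ Real.pi * Real.sqrt (n / K) := by
  have hgb : ∃ C, ∀ z, |G.gamma f f z| ≤ C :=
    ⟨1, fun z => abs_le.2 ⟨by linarith [G.gamma_self_nonneg f z], hg1 z⟩⟩
  -- gamma of P t f decays
  have hgamE : ∀ t, 0 < t → ∀ z,
      G.gamma (P t f) (P t f) z ≤ Real.exp (-(2 * K * t)) := by
    intro t ht z
    have hcd := hCDn f hb hgb t ht z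
    have hPt : P t (G.gamma f f) z ≤ 1 := hP.mono _ 1 hg1 t ht.le z
    have hE := Real.exp_pos (-(2 * K * t))
    have hsq := sq_nonneg (G.lap (P t f) z)
    have hE1 : Real.exp (-(2 * K * t)) < 1 := Real.exp_lt_one_iff.2 (by nlinarith)
    have hc : 0 ≤ (1 - Real.exp (-(2 * K * t))) / (K * n) := div_nonneg (by linarith) (by positivity)
    nlinarith [mul_nonneg hc hsq, mul_nonneg hE.le (sub_nonneg.2 hPt)]
  -- Laplacian bound
  have hlapb : ∀ t, 0 < t → ∀ z, |G.lap (P t f) z| ≤ Real.sqrt (n / K) *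
      (K * Real.exp (-(K * t)) / Real.sqrt (1 - Real.exp (-(K * t)) ^ 2)) := by
    intro t ht z
    have he2 : Real.exp (-(K * t)) ^ 2 = Real.exp (-(2 * K * t)) := by
      rw [sq, ← Real.exp_add]; congr 1; ring
    have hE := Real.exp_pos (-(2 * K * t))
    have hE1 : Real.exp (-(2 * K * t)) < 1 := Real.exp_lt_one_iff.2 (by nlinarith)
    have h1E : 0 < 1 - Real.exp (-(2 * K * t)) := by linarith
    have hcd := hCDn f hb hgb t ht z
    have hPt : P t (G.gamma f f) z ≤ 1 := hP.mono _ 1 hg1 t ht.le z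
    have hgam0 := G.gamma_self_nonneg (P t f) z
    have h5 : ((1 - Real.exp (-(2 * K * t))) / (K * n)) * (G.lap (P t f) z) ^ 2
        ≤ Real.exp (-(2 * K * t)) := by
      nlinarith [mul_nonneg hE.le (sub_nonneg.2 hPt)]
    have h6 : (G.lap (P t f) z) ^ 2
        ≤ Real.exp (-(2 * K * t)) * (K * n) / (1 - Real.exp (-(2 * K * t))) := by
      rw [le_div_iff₀ h1E]
      calc (G.lap (P t f) z) ^ 2 * (1 - Real.exp (-(2 * K * t)))
          = (((1 - Real.exp (-(2 * K * t))) / (K * n)) * (G.lap (P t f) z) ^ 2) * (K * n) := by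
            field_simp
        _ ≤ Real.exp (-(2 * K * t)) * (K * n) :=
            mul_le_mul_of_nonneg_right h5 (by positivity)
    have hrhs : (Real.sqrt (n / K) *
        (K * Real.exp (-(K * t)) / Real.sqrt (1 - Real.exp (-(K * t)) ^ 2))) ^ 2
        = Real.exp (-(2 * K * t)) * (K * n) / (1 - Real.exp (-(2 * K * t))) := by
      rw [mul_pow, div_pow, mul_pow, Real.sq_sqrt (le_of_lt (div_pos hn hK)),
        Real.sq_sqrt (by rw [he2]; linarith), he2]
      field_simp
    have hpos : 0 ≤ Real.sqrt (n / K) *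
        (K * Real.exp (-(K * t)) / Real.sqrt (1 - Real.exp (-(K * t)) ^ 2)) := by positivity
    calc |G.lap (P t f) z| = Real.sqrt ((G.lap (P t f) z) ^ 2) := (Real.sqrt_sq_eq_abs _).symm
      _ ≤ Real.sqrt ((Real.sqrt (n / K) *
            (K * Real.exp (-(K * t)) / Real.sqrt (1 - Real.exp (-(K * t)) ^ 2))) ^ 2) :=
          Real.sqrt_le_sqrt (by rw [hrhs]; exact h6)
      _ = _ := Real.sqrt_sq hpos
  -- uniform bound
  have hbd1 : ∀ z, ∀ T, 0 ≤ T → |P T f z - f z| ≤ Real.sqrt (n / K) * (Real.pi / 2) := by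
    intro z T hT
    have h := mono_help K n hK hn (fun t => P t f z) (fun t => G.lap (P t f) z)
      (fun t => hP.deriv f hb t z) (fun t ht => hlapb t ht z) T hT
    have h0 : P 0 f z = f z := by rw [hP.init f]
    simpa [h0] using h
  -- tendsto via connectedness
  have htend : Filter.Tendsto (fun t => P t f y - P t f x) Filter.atTop (nhds 0) := by
    obtain ⟨N, c, hc0, hcN, hcw⟩ := hconn x y
    have hteleq : ∀ t : ℝ, P t f y - P t f x
        = ∑ i ∈ Finset.range N, (P t f (c (i + 1)) - P t f (c i)) := by
      intro t; rw [Finset.sum_range_sub (f := fun i => P t f (c i)), hc0, hcN]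
    have hstep : ∀ i, i < N →
        Filter.Tendsto (fun t => P t f (c (i + 1)) - P t f (c i)) Filter.atTop (nhds 0) := by
      intro i hi
      have hw := hcw i hi
      have hmp := G.mpos (c i)
      apply squeeze_zero_norm'
        (a := fun t => Real.sqrt (2 * G.m (c i) / G.w (c i) (c (i + 1))) * Real.exp (-(K * t)))
      · filter_upwards [Filter.eventually_gt_atTop 0] with t ht
        have hterm := G.term_le_gamma (P t f) (c i) (c (i + 1))
        have hgam := hgamE t ht (c i)
        have he2 : Real.exp (-(2 * K * t)) = Real.exp (-(K * t)) ^ 2 := by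
          rw [sq, ← Real.exp_add]; congr 1; ring
        have hd2 : (P t f (c (i + 1)) - P t f (c i)) ^ 2
            ≤ (2 * G.m (c i) / G.w (c i) (c (i + 1))) * Real.exp (-(K * t)) ^ 2 := by
          rw [div_mul_eq_mul_div, le_div_iff₀ hw, ← he2]
          nlinarith [mul_le_mul_of_nonneg_left hgam (by positivity : (0:ℝ) ≤ 2 * G.m (c i))]
        rw [Real.norm_eq_abs]
        calc |P t f (c (i + 1)) - P t f (c i)|
            = Real.sqrt ((P t f (c (i + 1)) - P t f (c i)) ^ 2) := (Real.sqrt_sq_eq_abs _).symm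
          _ ≤ Real.sqrt ((2 * G.m (c i) / G.w (c i) (c (i + 1))) * Real.exp (-(K * t)) ^ 2) :=
              Real.sqrt_le_sqrt hd2
          _ = Real.sqrt (2 * G.m (c i) / G.w (c i) (c (i + 1))) * Real.exp (-(K * t)) := by
              rw [Real.sqrt_mul (by positivity), Real.sqrt_sq (Real.exp_nonneg _)]
      · have h1 : Filter.Tendsto (fun t : ℝ => K * t) Filter.atTop Filter.atTop :=
          Filter.Tendsto.const_mul_atTop hK Filter.tendsto_id
        have h2 := Real.tendsto_exp_neg_atTop_nhds_zero.comp h1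
        have h3 := h2.const_mul (Real.sqrt (2 * G.m (c i) / G.w (c i) (c (i + 1))))
        simpa [Function.comp] using h3
    have h2 := tendsto_finset_sum (Finset.range N)
      (fun i hi => hstep i (Finset.mem_range.1 hi))
    simp only [Finset.sum_const_zero] at h2
    exact h2.congr fun t => (hteleq t).symm
  -- conclude
  have hev : ∀ᶠ t in Filter.atTop,
      f y - f x - Real.pi * Real.sqrt (n / K) ≤ P t f y - P t f x := by
    filter_upwards [Filter.eventually_ge_atTop 0] with t ht
    have b1 := abs_le.1 (hbd1 y t ht)
    have b2 := abs_le.1 (hbd1 x t ht)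
    have hpi : Real.pi * Real.sqrt (n / K) = 2 * (Real.sqrt (n / K) * (Real.pi / 2)) := by ring
    linarith [b1.1, b1.2, b2.1, b2.2]
  have := ge_of_tendsto htend hev
  linarith

/-- the CD(K,n) semigroup inequality (for bounded f with bounded Γf)
implies diam_ρ ≤ π√(n/K). -/
theorem diamrho_le_of_CDn_semigroup (G : WGraph V) (hconn : G.Connected)
    (K n : ℝ) (hK : 0 < K) (hn : 0 < n)
    (P : ℝ → (V → ℝ) → V → ℝ) (hP : IsHeatSemigroup G P)
    (hCDn : ∀ (f : V → ℝ), (∃ C, ∀ x, |f x| ≤ C) → (∃ C, ∀ x, |G.gamma f f x| ≤ C) →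
      ∀ t, 0 < t → ∀ x,
        G.gamma (P t f) (P t f) x ≤ Real.exp (-(2 * K * t)) * P t (G.gamma f f) x
          - ((1 - Real.exp (-(2 * K * t))) / (K * n)) * (G.lap (P t f) x) ^ 2) :
    G.diamrho ≤ ENNReal.ofReal (Real.pi * Real.sqrt (n / K)) := by
  have hB : 0 ≤ Real.pi * Real.sqrt (n / K) :=
    mul_nonneg Real.pi_pos.le (Real.sqrt_nonneg _)
  rw [WGraph.diamrho]
  refine iSup_le fun x => iSup_le fun y => ?_
  rw [WGraph.rho]
  refine iSup_le fun f => iSup_le fun hf => ?_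
  apply ENNReal.ofReal_le_ofReal
  set B := Real.pi * Real.sqrt (n / K) with hBdef
  -- clamp f
  set a := f x with ha
  set g : V → ℝ := fun z => max (a - (B + 1)) (min (f z) (a + (B + 1))) with hgdef
  have hgx : g x = a := by
    have h1 : min (f x) (a + (B + 1)) = f x := min_eq_left (by simp [ha]; linarith)
    simp only [hgdef, h1, ← ha]
    rw [min_eq_left (by linarith)]
    exact max_eq_right (by linarith)
  have hlip : ∀ u v : V, (g u - g v) ^ 2 ≤ (f u - f v) ^ 2 := by
    intro u v
    have h1 : |g u - g v| ≤ |f u - f v| := by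
      calc |g u - g v| ≤ |min (f u) (a + (B + 1)) - min (f v) (a + (B + 1))| := by
            simpa [hgdef, max_comm] using
              abs_max_sub_max_le_abs (min (f u) (a + (B + 1))) (min (f v) (a + (B + 1)))
                (a - (B + 1))
        _ ≤ max |f u - f v| |(a + (B + 1)) - (a + (B + 1))| :=
            abs_min_sub_min_le_max (f u) (a + (B + 1)) (f v) (a + (B + 1))
        _ = |f u - f v| := by rw [sub_self, abs_zero, max_eq_left (abs_nonneg _)]
    calc (g u - g v) ^ 2 = |g u - g v| ^ 2 := (sq_abs _).symm
      _ ≤ |f u - f v| ^ 2 := by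
          exact pow_le_pow_left₀ (abs_nonneg _) h1 2
      _ = (f u - f v) ^ 2 := sq_abs _
  have hgG : ∀ z, G.gamma g g z ≤ 1 :=
    fun z => le_trans (G.gamma_le_gamma f g hlip z) (hf z)
  have hgbd : ∃ C, ∀ z, |g z| ≤ C := by
    refine ⟨|a| + (B + 1), fun z => abs_le.2 ⟨?_, ?_⟩⟩
    · have := le_max_left (a - (B + 1)) (min (f z) (a + (B + 1)))
      have h2 : -(|a| + (B + 1)) ≤ a - (B + 1) := by
        have := neg_abs_le a; linarith
      exact le_trans h2 this
    · apply max_le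
      · have := le_abs_self a; linarith
      · have := min_le_right (f z) (a + (B + 1))
        have h3 := le_abs_self a; linarith
  have hkey := key_bound G hconn K n hK hn P hP hCDn g hgbd hgG x y
  rw [hgx] at hkey
  -- conclude f y - f x ≤ B
  by_contra hcon
  push_neg at hcon
  have hfy : a + B < f y := by rw [ha]; linarith
  have hgy : a + B < g y := by
    have h1 : a + B < min (f y) (a + (B + 1)) := lt_min hfy (by linarith)
    exact lt_of_lt_of_le h1 (le_max_right _ _)
  linarith
end

section
/- On a finite weighted graph, the Bakry-Émery condition CD(K,∞) (i.e., Γ₂(f) ≥ KΓ(f) for all f) implies the semigroup gradient estimate Γ(P_t f) ≤ e^{-2Kt} P_t(Γf) pointwise for all f: V → ℝ and t ≥ 0, where P_t = e^{tΔ}. -/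
open scoped ENNReal

variable {V : Type*}

variable [Fintype V]

/-- The graph Laplacian as a linear map on functions (finite vertex set). -/
noncomputable def WGraph.lapL (G : WGraph V) : (V → ℝ) →ₗ[ℝ] (V → ℝ) where
  toFun f := G.lap f
  map_add' f g := by
    funext x
    simp only [WGraph.lap, tsum_fintype, Pi.add_apply]
    rw [← mul_add, ← Finset.sum_add_distrib]
    congr 1
    exact Finset.sum_congr rfl fun y _ => by ring
  map_smul' c f := by
    funext x
    simp only [WGraph.lap, tsum_fintype, Pi.smul_apply, smul_eq_mul, RingHom.id_apply]
    rw [Finset.mul_sum, Finset.mul_sum, Finset.mul_sum]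
    exact Finset.sum_congr rfl fun y _ => by ring

/-- The heat semigroup P_t = e^{tΔ} of a finite weighted graph. -/
noncomputable def WGraph.heat (G : WGraph V) (t : ℝ) (f : V → ℝ) : V → ℝ :=
  NormedSpace.exp (t • (LinearMap.toContinuousLinearMap G.lapL)) f

section AuxGradEst

set_option linter.unusedSectionVars false
set_option synthInstance.maxHeartbeats 1000000
set_option maxHeartbeats 1000000

open NormedSpace

namespace WGraph

variable [Fintype V] (G : WGraph V)

lemma lap_add' (f g : V → ℝ) : G.lap (f + g) = G.lap f + G.lap g := G.lapL.map_add f g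

lemma lap_smul' (c : ℝ) (f : V → ℝ) : G.lap (c • f) = c • G.lap f := G.lapL.map_smul c f

lemma gamma_comm' (f g : V → ℝ) : G.gamma f g = G.gamma g f := by
  funext x
  simp only [WGraph.gamma, mul_comm f g]
  ring

lemma gamma_add_left (f f' g : V → ℝ) :
    G.gamma (f + f') g = G.gamma f g + G.gamma f' g := by
  funext x
  have h : (f + f') * g = f * g + f' * g := add_mul f f' g
  simp only [WGraph.gamma, h, lap_add', Pi.add_apply]
  ring

lemma gamma_smul_left (c : ℝ) (f g : V → ℝ) :
    G.gamma (c • f) g = c • G.gamma f g := by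
  funext x
  have h : (c • f) * g = c • (f * g) := smul_mul_assoc c f g
  simp only [WGraph.gamma, h, lap_smul', Pi.smul_apply, smul_eq_mul]
  ring

noncomputable def gammaB : (V → ℝ) →ₗ[ℝ] (V → ℝ) →ₗ[ℝ] (V → ℝ) :=
  LinearMap.mk₂ ℝ G.gamma G.gamma_add_left G.gamma_smul_left
    (fun f g g' => by
      rw [G.gamma_comm' f (g + g'), G.gamma_add_left, G.gamma_comm' g f, G.gamma_comm' g' f])
    (fun c f g => by
      rw [G.gamma_comm' f (c • g), G.gamma_smul_left, G.gamma_comm' g f])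

noncomputable def gammaC : (V → ℝ) →L[ℝ] (V → ℝ) →L[ℝ] (V → ℝ) :=
  LinearMap.toContinuousLinearMap
    { toFun := fun f => LinearMap.toContinuousLinearMap (G.gammaB f)
      map_add' := fun f g => by
        ext h y
        show G.gamma (f + g) h y = G.gamma f h y + G.gamma g h y
        rw [G.gamma_add_left]
        rfl
      map_smul' := fun c f => by
        ext h y
        show G.gamma (c • f) h y = c • G.gamma f h y
        rw [G.gamma_smul_left]
        rfl }

lemma gammaC_apply (f g : V → ℝ) : G.gammaC f g = G.gamma f g := rfl

/-- Positivity preservation of the heat semigroup. -/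
lemma exp_smul_lap_nonneg {s : ℝ} (hs : 0 ≤ s) {f : V → ℝ} (hf : ∀ y, 0 ≤ f y) (x : V) :
    0 ≤ NormedSpace.exp (s • LinearMap.toContinuousLinearMap G.lapL) f x := by
  set L : (V → ℝ) →L[ℝ] (V → ℝ) := LinearMap.toContinuousLinearMap G.lapL with hL
  set c : ℝ := ∑ z, G.deg z with hc
  have hdeg : ∀ z, 0 ≤ G.deg z := fun z =>
    div_nonneg (by rw [tsum_fintype]; exact Finset.sum_nonneg fun y _ => G.nonneg z y)
      (G.mpos z).le
  have hcd : ∀ z, G.deg z ≤ c := fun z =>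
    Finset.single_le_sum (fun y _ => hdeg y) (Finset.mem_univ z)
  set M : (V → ℝ) →L[ℝ] (V → ℝ) := L + c • 1 with hM
  have hMpos : ∀ (g : V → ℝ), (∀ y, 0 ≤ g y) → ∀ y, 0 ≤ M g y := by
    intro g hg y
    have hsplit : ∑ z, G.w y z * (g z - g y)
        = (∑ z, G.w y z * g z) - (∑ z, G.w y z) * g y := by
      rw [Finset.sum_mul, ← Finset.sum_sub_distrib]
      exact Finset.sum_congr rfl fun z _ => by ring
    have h1 : M g y = (1 / G.m y) * ∑ z, G.w y z * g z + (c - G.deg y) * g y := by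
      have : M g y = G.lap g y + c * g y := rfl
      rw [this, WGraph.lap, WGraph.deg, tsum_fintype, tsum_fintype, hsplit]
      have hm := (G.mpos y).ne'
      field_simp
      ring
    rw [h1]
    have h2 : 0 ≤ (1 / G.m y) * ∑ z, G.w y z * g z :=
      mul_nonneg (div_nonneg zero_le_one (G.mpos y).le)
        (Finset.sum_nonneg fun z _ => mul_nonneg (G.nonneg y z) (hg z))
    exact add_nonneg h2 (mul_nonneg (sub_nonneg.2 (hcd y)) (hg y))
  have hMn : ∀ (n : ℕ) (g : V → ℝ), (∀ y, 0 ≤ g y) → ∀ y, 0 ≤ (M ^ n) g y := by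
    intro n
    induction n with
    | zero => intro g hg y; simpa using hg y
    | succ n ih =>
      intro g hg y
      have : (M ^ (n + 1)) g = (M ^ n) (M g) := by
        rw [pow_succ]
        rfl
      rw [this]
      exact ih (M g) (hMpos g hg) y
  have key : ∀ (g : V → ℝ), (∀ y, 0 ≤ g y) → ∀ y,
      0 ≤ NormedSpace.exp (s • M) g y := by
    intro g hg y
    have hsum := NormedSpace.expSeries_summable' (𝕂 := ℝ) (s • M)
    set e : (((V → ℝ) →L[ℝ] (V → ℝ)) →L[ℝ] ℝ) :=
      (ContinuousLinearMap.proj (R := ℝ) (φ := fun _ : V => ℝ) y).comp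
        (ContinuousLinearMap.apply ℝ (V → ℝ) g) with he
    have hmap := e.map_tsum hsum
    have hE : NormedSpace.exp (s • M) g y
        = ∑' n : ℕ, ((n.factorial : ℝ)⁻¹ * s ^ n) * ((M ^ n) g y) := by
      have hexp : NormedSpace.exp (s • M)
          = ∑' n : ℕ, ((n.factorial : ℝ))⁻¹ • (s • M) ^ n :=
        congrFun (NormedSpace.exp_eq_tsum ℝ) _
      have : NormedSpace.exp (s • M) g y = e (∑' n : ℕ, ((n.factorial : ℝ))⁻¹ • (s • M) ^ n) := by
        rw [hexp]
        rfl
      rw [this, hmap]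
      refine tsum_congr fun n => ?_
      have : (((n.factorial : ℝ))⁻¹ • (s • M) ^ n) = ((n.factorial : ℝ)⁻¹ * s ^ n) • (M ^ n) := by
        rw [smul_pow, mul_smul]
      rw [this]
      simp [he, mul_assoc]
    rw [hE]
    refine tsum_nonneg fun n => ?_
    have : (0:ℝ) ≤ (n.factorial : ℝ)⁻¹ * s ^ n := by positivity
    exact mul_nonneg this (hMn n g hg y)
  have hsplitexp : NormedSpace.exp (s • M)
      = Real.exp (s * c) • NormedSpace.exp (s • L) := by
    have h1 : s • M = s • L + (s * c) • (1 : (V → ℝ) →L[ℝ] (V → ℝ)) := by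
      rw [hM, smul_add, smul_smul]
    have hcomm : Commute (s • L) ((s * c) • (1 : (V → ℝ) →L[ℝ] (V → ℝ))) :=
      (Commute.one_right (s • L)).smul_right (s * c)
    rw [h1, NormedSpace.exp_add_of_commute_of_mem_ball (𝕂 := ℝ) hcomm
      (by rw [NormedSpace.expSeries_radius_eq_top]; exact edist_lt_top _ _)
      (by rw [NormedSpace.expSeries_radius_eq_top]; exact edist_lt_top _ _)]
    have h2 : NormedSpace.exp ((s * c) • (1 : (V → ℝ) →L[ℝ] (V → ℝ)))
        = Real.exp (s * c) • (1 : (V → ℝ) →L[ℝ] (V → ℝ)) := by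
      have ha : (s * c) • (1 : (V → ℝ) →L[ℝ] (V → ℝ))
          = algebraMap ℝ ((V → ℝ) →L[ℝ] (V → ℝ)) (s * c) :=
        (Algebra.algebraMap_eq_smul_one (s * c)).symm
      rw [ha, ← NormedSpace.algebraMap_exp_comm, ← Real.exp_eq_exp_ℝ,
        Algebra.algebraMap_eq_smul_one]
    rw [h2, mul_smul_comm, mul_one]
  have hEq : NormedSpace.exp (s • M) f x
      = Real.exp (s * c) * (NormedSpace.exp (s • L) f x) := by
    rw [hsplitexp]; rfl
  have h0 : 0 ≤ Real.exp (s * c) * (NormedSpace.exp (s • L) f x) := hEq ▸ key f hf x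
  exact le_of_mul_le_mul_left (by simpa using h0) (Real.exp_pos (s * c))

end WGraph

end AuxGradEst

set_option maxHeartbeats 1000000
set_option synthInstance.maxHeartbeats 1000000

/-- on a finite weighted graph, CD(K,∞) implies the gradient
estimate Γ(P_t f) ≤ e^{-2Kt} P_t(Γf) for P_t = e^{tΔ}. -/
theorem CD_implies_gradient_estimate (G : WGraph V) (K : ℝ)
    (hCD : ∀ (f : V → ℝ) (x : V), K * G.gamma f f x ≤ G.gamma2 f x) :
    ∀ (f : V → ℝ) (t : ℝ), 0 ≤ t → ∀ x,
      G.gamma (G.heat t f) (G.heat t f) x ≤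
        Real.exp (-(2 * K * t)) * G.heat t (G.gamma f f) x := by
  intro f t ht x
  set L : (V → ℝ) →L[ℝ] (V → ℝ) := LinearMap.toContinuousLinearMap G.lapL with hLdef
  set P : ℝ → ((V → ℝ) →L[ℝ] (V → ℝ)) := fun s => NormedSpace.exp (s • L) with hPdef
  have hlap : ∀ g : V → ℝ, L g = G.lap g := fun g => rfl
  have hP : ∀ s : ℝ, HasDerivAt P (P s * L) s := by
    intro s
    exact hasDerivAt_exp_smul_const (𝕂 := ℝ) (𝔸 := (V → ℝ) →L[ℝ] (V → ℝ)) L s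
  have hLP : ∀ (r : ℝ) (g : V → ℝ), P r (L g) = L (P r g) := by
    intro r g
    have hcomm : Commute (NormedSpace.exp (r • L)) L :=
      ((Commute.refl L).smul_left r).exp_left
    calc P r (L g) = (P r * L) g := rfl
      _ = (L * P r) g := by rw [hcomm.eq]
      _ = L (P r g) := rfl
  set u : ℝ → (V → ℝ) := fun s => P (t - s) f with hudef
  have hu : ∀ s : ℝ, HasDerivAt u (-(L (u s))) s := by
    intro s
    have h1 : HasDerivAt (fun r : ℝ => t - r) (-1 : ℝ) s := by
      exact ((hasDerivAt_id' s).const_sub t).congr_deriv (by ring)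
    have h2 : HasDerivAt (P ∘ fun r : ℝ => t - r) ((-1 : ℝ) • (P (t - s) * L)) s :=
      (hP (t - s)).scomp s h1
    have h2 : HasDerivAt (fun r : ℝ => P (t - r)) ((-1 : ℝ) • (P (t - s) * L)) s := h2
    have h3 := h2.clm_apply (hasDerivAt_const s f)
    simp only [map_zero, add_zero, ContinuousLinearMap.smul_apply,
      ContinuousLinearMap.mul_apply, neg_smul, one_smul] at h3
    rw [hLP] at h3
    exact h3
  set w : ℝ → (V → ℝ) := fun s => G.gammaC (u s) (u s) with hwdef
  have hw : ∀ s : ℝ, HasDerivAt w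
      (G.gammaC (-(L (u s))) (u s) + G.gammaC (u s) (-(L (u s)))) s := by
    intro s
    have hc : HasDerivAt (fun r => G.gammaC (u r)) (G.gammaC (-(L (u s)))) s :=
      G.gammaC.hasFDerivAt.comp_hasDerivAt s (hu s)
    exact hc.clm_apply (hu s)
  have hF : ∀ s : ℝ, HasDerivAt (fun r => P r (w r))
      ((P s * L) (w s)
        + P s (G.gammaC (-(L (u s))) (u s) + G.gammaC (u s) (-(L (u s))))) s := by
    intro s
    exact (hP s).clm_apply (hw s)
  set Fx : ℝ → ℝ := fun s => P s (w s) x with hFxdef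
  have hFx : ∀ s : ℝ, HasDerivAt Fx
      (((P s * L) (w s)
        + P s (G.gammaC (-(L (u s))) (u s) + G.gammaC (u s) (-(L (u s))))) x) s := by
    intro s
    exact (ContinuousLinearMap.proj (R := ℝ) (φ := fun _ : V => ℝ)
      x).hasFDerivAt.comp_hasDerivAt s (hF s)
  set φ : ℝ → ℝ := fun s => Real.exp (-(2 * K * s)) * Fx s with hφdef
  have hφ : ∀ s : ℝ, HasDerivAt φ
      (Real.exp (-(2 * K * s)) * (-(2 * K)) * Fx s
        + Real.exp (-(2 * K * s))
          * (((P s * L) (w s)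
            + P s (G.gammaC (-(L (u s))) (u s) + G.gammaC (u s) (-(L (u s))))) x)) s := by
    intro s
    have h1 : HasDerivAt (fun r : ℝ => -(2 * K * r)) (-(2 * K)) s := by
      exact (((hasDerivAt_id' s).const_mul (2 * K)).neg).congr_deriv (by ring)
    exact (h1.exp).mul (hFx s)
  -- the nonnegative pointwise function appearing in the derivative
  have hderiv_nonneg : ∀ s : ℝ, 0 ≤ s →
      0 ≤ Real.exp (-(2 * K * s)) * (-(2 * K)) * Fx s
        + Real.exp (-(2 * K * s))
          * (((P s * L) (w s)
            + P s (G.gammaC (-(L (u s))) (u s) + G.gammaC (u s) (-(L (u s))))) x) := by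
    intro s hs
    set g : V → ℝ := u s with hgdef
    set h : V → ℝ := fun y => 2 * (G.gamma2 g y - K * G.gamma g g y) with hhdef
    have hh_nonneg : ∀ y, 0 ≤ h y := by
      intro y
      have := hCD g y
      simp only [hhdef]
      nlinarith [hCD g y]
    have hcomb : (-(2 * K)) • w s + (L (w s)
        + (G.gammaC (-(L g)) g + G.gammaC g (-(L g)))) = h := by
      funext y
      have e1 : w s = G.gamma g g := rfl
      have e2 : G.gammaC (-(L g)) g = -(G.gamma (G.lap g) g) := by
        rw [map_neg]
        simp only [ContinuousLinearMap.neg_apply]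
        rw [G.gammaC_apply, hlap]
      have e3 : G.gammaC g (-(L g)) = -(G.gamma g (G.lap g)) := by
        rw [map_neg]
        rw [G.gammaC_apply, hlap]
      simp only [Pi.add_apply, Pi.smul_apply, Pi.neg_apply, e1, e2, e3, smul_eq_mul]
      have e4 : G.gamma (G.lap g) g = G.gamma g (G.lap g) := G.gamma_comm' _ _
      have e5 : L (G.gamma g g) y = G.lap (G.gamma g g) y := by rw [hlap]
      have e6 : G.gamma2 g y = (G.lap (G.gamma g g) y - 2 * G.gamma g (G.lap g) y) / 2 := rfl
      rw [e5, e4]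
      show _ = 2 * (G.gamma2 g y - K * G.gamma g g y)
      rw [e6]
      ring
    have hPh : 0 ≤ P s h x := G.exp_smul_lap_nonneg hs hh_nonneg x
    have hPh' : P s h x = (-(2 * K)) * (P s (w s) x)
        + (P s (L (w s)) x + P s (G.gammaC (-(L g)) g + G.gammaC g (-(L g))) x) := by
      conv_lhs => rw [← hcomb]
      rw [ContinuousLinearMap.map_add (P s), ContinuousLinearMap.map_smul (P s),
        ContinuousLinearMap.map_add (P s)]
      simp only [Pi.add_apply, Pi.smul_apply, smul_eq_mul]
    have hval : ((P s * L) (w s)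
        + P s (G.gammaC (-(L g)) g + G.gammaC g (-(L g)))) x
        = P s (L (w s)) x + P s (G.gammaC (-(L g)) g + G.gammaC g (-(L g))) x := by
      simp only [Pi.add_apply, ContinuousLinearMap.mul_apply]
    rw [hval]
    have hfinal : Real.exp (-(2 * K * s)) * (-(2 * K)) * Fx s
        + Real.exp (-(2 * K * s))
          * (P s (L (w s)) x + P s (G.gammaC (-(L g)) g + G.gammaC g (-(L g))) x)
        = Real.exp (-(2 * K * s)) * (P s h x) := by
      have hFxs : Fx s = P s (w s) x := rfl
      rw [hPh', hFxs]
      ring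
    rw [hfinal]
    exact mul_nonneg (Real.exp_pos _).le hPh
  have hmono : MonotoneOn φ (Set.Icc 0 t) := by
    apply monotoneOn_of_deriv_nonneg (convex_Icc 0 t)
    · have : Differentiable ℝ φ := fun s => (hφ s).differentiableAt
      exact this.continuous.continuousOn
    · intro s _
      exact ((hφ s).differentiableAt).differentiableWithinAt
    · intro s hs
      rw [interior_Icc] at hs
      rw [(hφ s).deriv]
      exact hderiv_nonneg s hs.1.le
  have hP0 : P 0 = 1 := by
    show NormedSpace.exp ((0 : ℝ) • L) = 1
    rw [zero_smul, NormedSpace.exp_zero]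
  have e0 : φ 0 = G.gamma (G.heat t f) (G.heat t f) x := by
    have h1 : u 0 = G.heat t f := by
      show P (t - 0) f = G.heat t f
      rw [sub_zero]
      rfl
    show Real.exp (-(2 * K * 0)) * (P 0 (G.gammaC (u 0) (u 0)) x) = _
    rw [h1, hP0, mul_zero, neg_zero, Real.exp_zero, one_mul,
      ContinuousLinearMap.one_apply, G.gammaC_apply]
  have e1 : φ t = Real.exp (-(2 * K * t)) * G.heat t (G.gamma f f) x := by
    have h1 : u t = f := by
      show P (t - t) f = f
      rw [sub_self]
      show NormedSpace.exp ((0 : ℝ) • L) f = f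
      rw [zero_smul, NormedSpace.exp_zero]
      rfl
    show Real.exp (-(2 * K * t)) * (P t (G.gammaC (u t) (u t)) x) = _
    rw [h1, G.gammaC_apply]
    rfl
  calc G.gamma (G.heat t f) (G.heat t f) x = φ 0 := e0.symm
    _ ≤ φ t := hmono ⟨le_refl 0, ht⟩ ⟨ht, le_refl t⟩ ht
    _ = Real.exp (-(2 * K * t)) * G.heat t (G.gamma f f) x := e1
end
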